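/- Let A be an n × n {+1,-1}-matrix and m an integer with n ≥ m > 1. If the sum of det(M)² over all m × m submatrices M of A equals n^m · C(n,m) (i.e., equality holds in the mean-square bound E(det(M)²) ≤ n^m / C(n,m)), then A is a Hadamard matrix, i.e., A·Aᵀ = n·I. -/

import Mathlib

open Matrix

open Matrix Finset

section CB
variable {m n : ℕ} {R : Type*} [CommRing R]

lemma det_mul_expand (B : Matrix (Fin m) (Fin n) R) (C : Matrix (Fin n) (Fin m) R) :
    (B * C).det = ∑ φ : Fin m → Fin n, (∏ i, B i (φ i)) * (C.submatrix φ id).det := by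
  have h1 : (B * C).det
      = (Matrix.detRowAlternating : (Fin m → R) [⋀^Fin m]→ₗ[R] R)
          (fun i => ∑ k, B i k • C k) := by
    congr 1
    ext i j
    simp [Matrix.mul_apply]
  rw [h1]
  have h2 := (Matrix.detRowAlternating : (Fin m → R) [⋀^Fin m]→ₗ[R] R).toMultilinearMap.map_sum
      (g := fun (i : Fin m) (k : Fin n) => B i k • C k)
  simp only [AlternatingMap.coe_multilinearMap] at h2
  rw [h2]
  refine Finset.sum_congr rfl fun φ _ => ?_
  have := (Matrix.detRowAlternating : (Fin m → R) [⋀^Fin m]→ₗ[R] R).toMultilinearMap.map_smul_univ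
      (fun i => B i (φ i)) (fun i => C (φ i))
  simp only [AlternatingMap.coe_multilinearMap] at this ⊢
  rw [this, smul_eq_mul]
  rfl

end CB

section CB2
variable {m n : ℕ} {R : Type*} [CommRing R]

lemma sum_injective_eq (h : ∀ φ : Fin m → Fin n, R) :
    ∑ φ ∈ Finset.univ.filter (fun φ : Fin m → Fin n => Function.Injective φ), h φ
      = ∑ p : {g : Fin m → Fin n // StrictMono g} × Equiv.Perm (Fin m), h (p.1.1 ∘ p.2) := by
  classical
  refine (Finset.sum_bij' (fun (p : {g : Fin m → Fin n // StrictMono g} × Equiv.Perm (Fin m)) _ => p.1.1 ∘ ⇑p.2)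
    (fun φ hφ => ?_) ?_ ?_ ?_ ?_ ?_).symm
  · -- inverse map
    have hφ' : Function.Injective φ := by simpa using hφ
    have hcard : (Finset.univ.image φ).card = m := by
      rw [Finset.card_image_of_injective _ hφ', Finset.card_univ, Fintype.card_fin]
    refine ⟨⟨(Finset.univ.image φ).orderEmbOfFin hcard,
      ((Finset.univ.image φ).orderEmbOfFin hcard).strictMono⟩,
      Equiv.ofBijective (fun a => ((Finset.univ.image φ).orderIsoOfFin hcard).symm
        ⟨φ a, Finset.mem_image_of_mem _ (Finset.mem_univ a)⟩) ?_⟩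
    exact Finite.injective_iff_bijective.mp
      (fun a b hab => hφ' (by simpa [Subtype.ext_iff] using congrArg (fun x => (((Finset.univ.image φ).orderIsoOfFin hcard) x : Fin n)) hab))
  · intro p _
    simp only [Finset.mem_filter, Finset.mem_univ, true_and]
    exact p.1.2.injective.comp p.2.injective
  · intro p _; exact Finset.mem_univ _
  · -- j ∘ i = id
    intro p _
    obtain ⟨⟨g, hg⟩, σ⟩ := p
    have hmem : ∀ x, g x ∈ Finset.univ.image (g ∘ σ) := by
      intro x
      refine Finset.mem_image.2 ⟨σ.symm x, Finset.mem_univ _, by simp⟩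
    have hcard : (Finset.univ.image (g ∘ ⇑σ)).card = m := by
      rw [Finset.card_image_of_injective _ (hg.injective.comp σ.injective),
        Finset.card_univ, Fintype.card_fin]
    have hgeq : g = (Finset.univ.image (g ∘ ⇑σ)).orderEmbOfFin hcard :=
      Finset.orderEmbOfFin_unique hcard hmem hg
    refine Prod.ext (Subtype.ext ?_) (Equiv.ext fun x => ?_)
    · exact hgeq.symm
    · simp only [Equiv.ofBijective_apply]
      rw [OrderIso.symm_apply_eq]
      refine Subtype.ext ?_
      rw [Finset.coe_orderIsoOfFin_apply]
      exact congrFun hgeq (σ x)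
  · -- i ∘ j = id
    intro φ hφ
    funext a
    simp only [Function.comp_apply]
    rw [← Finset.coe_orderIsoOfFin_apply]
    exact congrArg Subtype.val
      (((Finset.univ.image φ).orderIsoOfFin _).apply_symm_apply ⟨φ a, _⟩)
  · intro p _; rfl

end CB2

section CB3
variable {m n : ℕ} {R : Type*} [CommRing R]

lemma cauchy_binet (B : Matrix (Fin m) (Fin n) R) (C : Matrix (Fin n) (Fin m) R) :
    (B * C).det = ∑ g : {g : Fin m → Fin n // StrictMono g},
      (B.submatrix id g.1).det * (C.submatrix g.1 id).det := by
  classical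
  rw [det_mul_expand]
  have h0 : ∑ φ : Fin m → Fin n, (∏ i, B i (φ i)) * (C.submatrix φ id).det
      = ∑ φ ∈ Finset.univ.filter (fun φ : Fin m → Fin n => Function.Injective φ),
          (∏ i, B i (φ i)) * (C.submatrix φ id).det := by
    refine (Finset.sum_subset (Finset.filter_subset _ _) ?_).symm
    intro φ _ hφ
    simp only [Finset.mem_filter, Finset.mem_univ, true_and] at hφ
    rw [Function.not_injective_iff] at hφ
    obtain ⟨a, b, hab, hne⟩ := hφ
    have hz : (C.submatrix φ id).det = 0 :=
      Matrix.det_zero_of_row_eq hne (by funext j; simp [hab])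
    rw [hz, mul_zero]
  rw [h0, sum_injective_eq (fun φ => (∏ i, B i (φ i)) * (C.submatrix φ id).det),
    Fintype.sum_prod_type]
  refine Finset.sum_congr rfl fun g _ => ?_
  have key : ∀ σ : Equiv.Perm (Fin m), (C.submatrix (g.1 ∘ σ) id).det
      = (Equiv.Perm.sign σ : ℤ) * (C.submatrix g.1 id).det := by
    intro σ
    have h1 : C.submatrix (g.1 ∘ ⇑σ) id = (C.submatrix g.1 id).submatrix σ id := by
      rw [Matrix.submatrix_submatrix]; rfl
    rw [h1, Matrix.det_permute]
  calc ∑ σ : Equiv.Perm (Fin m), (∏ i, B i ((g.1 ∘ σ) i)) * (C.submatrix (g.1 ∘ σ) id).det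
      = (∑ σ : Equiv.Perm (Fin m), (Equiv.Perm.sign σ : ℤ) * ∏ i, B i (g.1 (σ i)))
          * (C.submatrix g.1 id).det := by
        rw [Finset.sum_mul]
        refine Finset.sum_congr rfl fun σ _ => ?_
        rw [key σ]
        simp only [Function.comp_apply]
        ring
    _ = (B.submatrix id g.1).det * (C.submatrix g.1 id).det := by
        congr 1
        rw [← Matrix.det_transpose (B.submatrix id g.1), Matrix.det_apply']
        rfl

end CB3

open Matrix Finset
open scoped RealInnerProductSpace
open InnerProductSpace

instance finWellFoundedLT (k : ℕ) : WellFoundedLT (Fin k) := inferInstance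

section Gram
variable {m n : ℕ}

local notation "E" => EuclideanSpace ℝ (Fin n)

/-- Coefficients expressing `v i` in terms of the Gram–Schmidt vectors. -/
noncomputable def gsCoeff (v : Fin m → E) (i j : Fin m) : ℝ :=
  if j = i then 1 else
    if j < i then ⟪gramSchmidt ℝ v j, v i⟫ / ‖gramSchmidt ℝ v j‖ ^ 2 else 0

lemma gs_expand (v : Fin m → E) (i : Fin m) :
    v i = ∑ j : Fin m, gsCoeff v i j • gramSchmidt ℝ v j := by
  classical
  rw [← Finset.sum_subset (Finset.subset_univ (Finset.Iic i))]
  swap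
  · intro j _ hj
    have h1 : ¬ j ≤ i := by simpa using hj
    rw [gsCoeff, if_neg (fun h => h1 (le_of_eq h)), if_neg (fun h => h1 h.le), zero_smul]
  rw [← Finset.Iio_insert i, Finset.sum_insert (Finset.notMem_Iio_self)]
  have h2 : gsCoeff v i i = 1 := by simp [gsCoeff]
  rw [h2, one_smul]
  have h3 : ∀ j ∈ Finset.Iio i, gsCoeff v i j • gramSchmidt ℝ v j
      = (ℝ ∙ gramSchmidt ℝ v j).starProjection (v i) := by
    intro j hj
    have hji : j < i := Finset.mem_Iio.mp hj
    rw [Submodule.starProjection_singleton, gsCoeff, if_neg hji.ne, if_pos hji]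
    norm_num
  rw [Finset.sum_congr rfl h3]
  exact gramSchmidt_def' ℝ v i

lemma gs_inner_self (v : Fin m → E) (i : Fin m) :
    ⟪gramSchmidt ℝ v i, v i⟫ = ‖gramSchmidt ℝ v i‖ ^ 2 := by
  classical
  conv_lhs => rw [gs_expand v i]
  rw [inner_sum]
  rw [Finset.sum_eq_single i]
  · rw [real_inner_smul_right, real_inner_self_eq_norm_sq]
    simp [gsCoeff]
  · intro j _ hj
    rw [real_inner_smul_right, gramSchmidt_orthogonal ℝ v (Ne.symm hj), mul_zero]
  · intro h; exact absurd (Finset.mem_univ i) h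

lemma gram_det (v : Fin m → E) :
    (Matrix.of fun i j => ⟪v i, v j⟫).det = ∏ i, ‖gramSchmidt ℝ v i‖ ^ 2 := by
  classical
  set u := gramSchmidt ℝ v with hu
  have hfac : (Matrix.of fun i j => ⟪v i, v j⟫)
      = (Matrix.of fun i j => gsCoeff v i j) * (Matrix.of fun i j => ⟪u i, v j⟫) := by
    ext i k
    simp only [Matrix.mul_apply, Matrix.of_apply]
    calc ⟪v i, v k⟫ = ⟪∑ j, gsCoeff v i j • u j, v k⟫ := by rw [← gs_expand]
      _ = ∑ j, gsCoeff v i j * ⟪u j, v k⟫ := by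
          rw [sum_inner]
          exact Finset.sum_congr rfl fun j _ => real_inner_smul_left _ _ _
  rw [hfac, Matrix.det_mul]
  have hC : (Matrix.of fun i j => gsCoeff v i j).det = 1 := by
    rw [Matrix.det_of_lowerTriangular _ (by
      intro i j hij
      have hlt : i < j := hij
      simp [gsCoeff, hlt.ne', not_lt_of_gt hlt])]
    exact Finset.prod_eq_one fun i _ => by simp [gsCoeff]
  have hM : (Matrix.of fun i j => ⟪u i, v j⟫).det = ∏ i, ‖u i‖ ^ 2 := by
    rw [Matrix.det_of_upperTriangular (by
      intro i j hij
      exact gramSchmidt_inv_triangular ℝ v hij)]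
    exact Finset.prod_congr rfl fun i _ => gs_inner_self v i
  rw [hC, hM, one_mul]

lemma gs_norm_decomp (v : Fin m → E) (i : Fin m) :
    ‖v i‖ ^ 2 = ‖gramSchmidt ℝ v i‖ ^ 2 + ‖v i - gramSchmidt ℝ v i‖ ^ 2 := by
  have horth : ⟪gramSchmidt ℝ v i, v i - gramSchmidt ℝ v i⟫ = 0 := by
    rw [inner_sub_right, gs_inner_self, real_inner_self_eq_norm_sq, sub_self]
  have h := norm_add_sq_real (gramSchmidt ℝ v i) (v i - gramSchmidt ℝ v i)
  rw [add_sub_cancel] at h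
  rw [h, horth]
  ring

lemma gram_orthogonal_of_det_eq (v : Fin m → E) {N : ℝ} (hN : 0 < N)
    (hnorm : ∀ i, ‖v i‖ ^ 2 = N)
    (hdet : (Matrix.of fun i j => ⟪v i, v j⟫).det = N ^ m)
    {i j : Fin m} (hij : i ≠ j) : ⟪v i, v j⟫ = 0 := by
  classical
  have hprod : ∏ i : Fin m, ‖gramSchmidt ℝ v i‖ ^ 2 = N ^ m := by
    rw [← gram_det]; exact hdet
  have hle : ∀ i, ‖gramSchmidt ℝ v i‖ ^ 2 ≤ N := by
    intro i
    have h1 := gs_norm_decomp v i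
    nlinarith [sq_nonneg ‖v i - gramSchmidt ℝ v i‖, hnorm i]
  have hpos : ∀ i ∈ (Finset.univ : Finset (Fin m)), 0 < ‖gramSchmidt ℝ v i‖ ^ 2 := by
    intro i _
    rcases (sq_nonneg ‖gramSchmidt ℝ v i‖).lt_or_eq with h | h
    · exact h
    · exfalso
      have : ∏ i : Fin m, ‖gramSchmidt ℝ v i‖ ^ 2 = 0 :=
        Finset.prod_eq_zero (Finset.mem_univ i) h.symm
      rw [hprod] at this
      exact (pow_pos hN m).ne' this
  have hall : ∀ i, ‖gramSchmidt ℝ v i‖ ^ 2 = N := by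
    by_contra h
    push_neg at h
    obtain ⟨k, hk⟩ := h
    have hlt := Finset.prod_lt_prod hpos (fun i _ => hle i)
      ⟨k, Finset.mem_univ k, lt_of_le_of_ne (hle k) hk⟩
    rw [hprod, Finset.prod_const, Finset.card_univ, Fintype.card_fin] at hlt
    exact lt_irrefl _ hlt
  have hveq : ∀ i, v i = gramSchmidt ℝ v i := by
    intro i
    have h1 := gs_norm_decomp v i
    rw [hnorm i, hall i] at h1
    have h2 : ‖v i - gramSchmidt ℝ v i‖ ^ 2 = 0 := by linarith
    have h3 : ‖v i - gramSchmidt ℝ v i‖ = 0 := sq_eq_zero_iff.mp h2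
    exact sub_eq_zero.mp (norm_eq_zero.mp h3)
  rw [hveq i, hveq j]
  exact gramSchmidt_orthogonal ℝ v hij

end Gram
section Glue
open Matrix Finset
open scoped RealInnerProductSpace

variable {m n : ℕ}

lemma card_strictMono_subtype (m n : ℕ) :
    Fintype.card {f : Fin m → Fin n // StrictMono f} = n.choose m := by
  classical
  have e : {f : Fin m → Fin n // StrictMono f} ≃ {s : Finset (Fin n) // s.card = m} := by
    refine ⟨fun f => ⟨Finset.univ.image f.1, ?_⟩,
      fun s => ⟨s.1.orderEmbOfFin s.2, (s.1.orderEmbOfFin s.2).strictMono⟩, ?_, ?_⟩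
    · rw [Finset.card_image_of_injective _ f.2.injective, Finset.card_univ, Fintype.card_fin]
    · intro f
      exact Subtype.ext (Finset.orderEmbOfFin_unique _
        (fun x => Finset.mem_image_of_mem _ (Finset.mem_univ x)) f.2).symm
    · intro s
      refine Subtype.ext ?_
      ext a
      simp only [Finset.mem_image, Finset.mem_univ, true_and]
      constructor
      · rintro ⟨i, rfl⟩; exact Finset.orderEmbOfFin_mem _ _ _
      · intro ha
        have hr := Finset.range_orderEmbOfFin s.1 s.2
        have : a ∈ Set.range (s.1.orderEmbOfFin s.2) := by rw [hr]; exact ha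
        obtain ⟨i, hi⟩ := this
        exact ⟨i, hi⟩
  rw [Fintype.card_congr e, Fintype.card_finset_len, Fintype.card_fin]

lemma all_eq_of_sum_eq {ι : Type*} [Fintype ι] (f : ι → ℤ) (b : ℤ)
    (hle : ∀ i, f i ≤ b) (hsum : ∑ i, f i = (Fintype.card ι : ℤ) * b) (i : ι) : f i = b := by
  by_contra h
  have hlt := Finset.sum_lt_sum (fun j (_ : j ∈ Finset.univ) => hle j)
    ⟨i, Finset.mem_univ i, lt_of_le_of_ne (hle i) h⟩
  rw [Finset.sum_const, Finset.card_univ, nsmul_eq_mul, hsum] at hlt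
  exact lt_irrefl _ hlt

lemma sq_minor_sum (A : Matrix (Fin n) (Fin n) ℤ) (f : Fin m → Fin n) :
    ∑ g : {g : Fin m → Fin n // StrictMono g}, (A.submatrix f g.1).det ^ 2
      = ((A * Aᵀ).submatrix f f).det := by
  have h1 : (A * Aᵀ).submatrix f f = (A.submatrix f id) * (Aᵀ.submatrix id f) := by
    ext i j
    simp [Matrix.mul_apply, Matrix.submatrix_apply]
  rw [h1, cauchy_binet]
  refine Finset.sum_congr rfl fun g _ => ?_
  have h2 : (A.submatrix f id).submatrix id g.1 = A.submatrix f g.1 := by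
    rw [Matrix.submatrix_submatrix]
    rfl
  have h3 : (Aᵀ.submatrix id f).submatrix g.1 id = (A.submatrix f g.1)ᵀ := by
    rw [Matrix.submatrix_submatrix, ← Matrix.transpose_submatrix]
    rfl
  rw [h2, h3, Matrix.det_transpose, sq]

end Glue
section Main
open Matrix Finset
open scoped RealInnerProductSpace

variable {m n : ℕ}

/-- The rows of a `±1` matrix selected by `f`, as vectors in Euclidean space. -/
noncomputable def rowVec (A : Matrix (Fin n) (Fin n) ℤ) (f : Fin m → Fin n) (a : Fin m) :
    EuclideanSpace ℝ (Fin n) :=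
  (WithLp.equiv 2 (Fin n → ℝ)).symm (fun k => (A (f a) k : ℝ))

lemma rowVec_gram (A : Matrix (Fin n) (Fin n) ℤ) (f : Fin m → Fin n) :
    ((A * Aᵀ).submatrix f f).map (Int.cast : ℤ → ℝ)
      = Matrix.of fun a b => ⟪rowVec A f a, rowVec A f b⟫ := by
  ext a b
  simp only [Matrix.map_apply, Matrix.submatrix_apply, Matrix.mul_apply, Matrix.of_apply,
    rowVec, PiLp.inner_apply, RCLike.inner_apply, conj_trivial, WithLp.equiv_symm_apply, PiLp.toLp_apply,
    Matrix.transpose_apply]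
  push_cast
  exact Finset.sum_congr rfl fun _ _ => mul_comm _ _

lemma rowVec_norm (A : Matrix (Fin n) (Fin n) ℤ) (hA : ∀ i j, A i j = 1 ∨ A i j = -1)
    (f : Fin m → Fin n) (a : Fin m) : ‖rowVec A f a‖ ^ 2 = (n : ℝ) := by
  rw [← real_inner_self_eq_norm_sq]
  simp only [rowVec, PiLp.inner_apply, RCLike.inner_apply, conj_trivial,
    WithLp.equiv_symm_apply, PiLp.toLp_apply]
  have h1 : ∀ k, ((A (f a) k : ℝ)) * ((A (f a) k : ℝ)) = 1 := by
    intro k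
    rcases hA (f a) k with h | h <;> rw [h] <;> norm_num
  rw [Finset.sum_congr rfl fun k _ => h1 k]
  simp

lemma minor_det_le (A : Matrix (Fin n) (Fin n) ℤ) (hA : ∀ i j, A i j = 1 ∨ A i j = -1)
    (f : Fin m → Fin n) : ((A * Aᵀ).submatrix f f).det ≤ (n : ℤ) ^ m := by
  have hcast : (((A * Aᵀ).submatrix f f).det : ℝ)
      = (Matrix.of fun a b => ⟪rowVec A f a, rowVec A f b⟫).det := by
    rw [← rowVec_gram]
    have h := RingHom.map_det (Int.castRingHom ℝ) ((A * Aᵀ).submatrix f f)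
    simpa [RingHom.mapMatrix_apply, eq_intCast, Int.coe_castRingHom] using h
  have hle : (Matrix.of fun a b => ⟪rowVec A f a, rowVec A f b⟫).det ≤ (n : ℝ) ^ m := by
    rw [gram_det]
    calc ∏ i, ‖gramSchmidt ℝ (rowVec A f) i‖ ^ 2
        ≤ ∏ i : Fin m, (n : ℝ) := by
          refine Finset.prod_le_prod (fun i _ => sq_nonneg _) (fun i _ => ?_)
          have h1 := gs_norm_decomp (rowVec A f) i
          have h2 := rowVec_norm A hA f i
          nlinarith [sq_nonneg ‖rowVec A f i - gramSchmidt ℝ (rowVec A f) i‖]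
      _ = (n : ℝ) ^ m := by rw [Finset.prod_const, Finset.card_univ, Fintype.card_fin]
  have := hcast ▸ hle
  exact_mod_cast this

/-- If the sum of squared minors of order `m` of an `n × n` `{±1}`-matrix `A`
(over all pairs of strictly monotone index maps `Fin m → Fin n`) attains the
upper bound `n^m * C(n,m)`, then `A` is a Hadamard matrix. -/
theorem hadamard_of_sum_sq_minors_eq (n m : ℕ) (hm : 1 < m) (hmn : m ≤ n)
    (A : Matrix (Fin n) (Fin n) ℤ) (hA : ∀ i j, A i j = 1 ∨ A i j = -1)
    (heq : ∑ f : {f : Fin m → Fin n // StrictMono f},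
        ∑ g : {g : Fin m → Fin n // StrictMono g},
          (A.submatrix f.1 g.1).det ^ 2 = (n : ℤ) ^ m * (n.choose m : ℤ)) :
    A * Aᵀ = (n : ℤ) • (1 : Matrix (Fin n) (Fin n) ℤ) := by
  classical
  have hn : 0 < n := lt_of_lt_of_le (by omega) hmn
  have heq2 : ∑ f : {f : Fin m → Fin n // StrictMono f}, ((A * Aᵀ).submatrix f.1 f.1).det
      = (Fintype.card {f : Fin m → Fin n // StrictMono f} : ℤ) * (n : ℤ) ^ m := by
    rw [Finset.sum_congr rfl fun f _ => (sq_minor_sum A f.1).symm, heq, card_strictMono_subtype]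
    ring
  have hE : ∀ f : {f : Fin m → Fin n // StrictMono f},
      ((A * Aᵀ).submatrix f.1 f.1).det = (n : ℤ) ^ m :=
    all_eq_of_sum_eq _ _ (fun f => minor_det_le A hA f.1) heq2
  ext i j
  rw [Matrix.smul_apply, Matrix.one_apply]
  by_cases hij : i = j
  · subst hij
    rw [if_pos rfl, smul_eq_mul, mul_one, Matrix.mul_apply]
    have h1 : ∀ k, A i k * Aᵀ k i = 1 := by
      intro k
      rcases hA i k with h | h <;> simp [Matrix.transpose_apply, h]
    rw [Finset.sum_congr rfl fun k _ => h1 k]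
    simp
  · rw [if_neg hij, smul_eq_mul, mul_zero]
    -- find a strictly monotone f whose range contains i and j
    obtain ⟨t, hsub, hcard⟩ := Finset.exists_superset_card_eq
      (s := ({i, j} : Finset (Fin n))) (n := m)
      (le_trans (Finset.card_insert_le _ _) (by simp; omega))
      (by rw [Fintype.card_fin]; exact hmn)
    set f : Fin m → Fin n := ⇑(t.orderEmbOfFin hcard) with hf
    have hfmono : StrictMono f := (t.orderEmbOfFin hcard).strictMono
    have hmemrange : ∀ x ∈ t, ∃ a, f a = x := by
      intro x hx
      have hr := Finset.range_orderEmbOfFin t hcard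
      have : x ∈ Set.range (t.orderEmbOfFin hcard) := by rw [hr]; exact hx
      exact this
    obtain ⟨a, ha⟩ := hmemrange i (hsub (Finset.mem_insert_self _ _))
    obtain ⟨b, hb⟩ := hmemrange j (hsub (by simp))
    have hab : a ≠ b := fun h => hij (by rw [← ha, ← hb, h])
    have hdetR : (Matrix.of fun a b => ⟪rowVec A f a, rowVec A f b⟫).det = (n : ℝ) ^ m := by
      rw [← rowVec_gram]
      have h := RingHom.map_det (Int.castRingHom ℝ) ((A * Aᵀ).submatrix f f)
      simp only [RingHom.mapMatrix_apply, eq_intCast, Int.coe_castRingHom] at h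
      rw [← h, hE ⟨f, hfmono⟩]
      push_cast
      rfl
    have horth := gram_orthogonal_of_det_eq (rowVec A f)
      (by exact_mod_cast hn : (0:ℝ) < (n:ℝ)) (rowVec_norm A hA f) hdetR hab
    have hentry : (((A * Aᵀ) i j : ℤ) : ℝ) = 0 := by
      have hmap := congrFun (congrFun (rowVec_gram A f) a) b
      simp only [Matrix.map_apply, Matrix.submatrix_apply, Matrix.of_apply, ha, hb] at hmap
      rw [hmap]
      exact horth
    exact_mod_cast hentry

end Main
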